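/- Let α ∈ (0, π] and let m ≥ 1 be an odd integer. Then ∫₀^α (1 − θ/α)² (cos θ)^m sin θ dθ = 1/(m+1) − (1/((m+1) 2^{m+1})) binom(m+1, (m+1)/2) + (2^{1−m}/((m+1) α²)) Σ_{k=0}^{(m−1)/2} binom(m+1, k) (cos((m−2k+1)α) − 1)/(m−2k+1)². -/

import Mathlib

open Real

lemma two_cos_pow (n : ℕ) (x : ℝ) :
    (2 * Real.cos x) ^ n
      = ∑ k ∈ Finset.range (n + 1), (n.choose k : ℝ) * Real.cos ((2 * (k : ℝ) - n) * x) := by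
  have hC : ((2 : ℂ) * Complex.cos x) ^ n
      = ∑ k ∈ Finset.range (n + 1),
          (n.choose k : ℂ) * Complex.exp ((((2 * (k : ℝ) - n) * x : ℝ) : ℂ) * Complex.I) := by
    have h2 : (2 : ℂ) * Complex.cos x = Complex.exp (x * Complex.I) + Complex.exp (-x * Complex.I) := by
      rw [Complex.cos]
      ring
    rw [h2, add_pow]
    refine Finset.sum_congr rfl fun k hk => ?_
    have hk' : k ≤ n := Nat.lt_succ_iff.mp (Finset.mem_range.mp hk)
    rw [← Complex.exp_nat_mul, ← Complex.exp_nat_mul, ← Complex.exp_add]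
    push_cast [hk']
    ring_nf
  calc (2 * Real.cos x) ^ n = ((((2 * Real.cos x) ^ n : ℝ) : ℂ)).re := (Complex.ofReal_re _).symm
    _ = (((2 : ℂ) * Complex.cos x) ^ n).re := by push_cast [Complex.ofReal_cos]; ring_nf
    _ = _ := by
        rw [hC, Complex.re_sum]
        refine Finset.sum_congr rfl fun k hk => ?_
        rw [show ((n.choose k : ℂ)) = (((n.choose k : ℝ)) : ℂ) by push_cast; rfl,
          Complex.re_ofReal_mul, Complex.exp_ofReal_mul_I_re]

section helpers

lemma fold_sym (s : ℕ) (F : ℕ → ℝ) (hsym : ∀ k, k ≤ 2*s → F (2*s - k) = F k) :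
    ∑ k ∈ Finset.range (2*s+1), F k = F s + 2 * ∑ k ∈ Finset.range s, F k := by
  have h1 : 2*s+1 = (s+1) + s := by ring
  rw [h1, Finset.sum_range_add, Finset.sum_range_succ]
  have h2 : ∑ k ∈ Finset.range s, F (s+1+k) = ∑ k ∈ Finset.range s, F k := by
    rw [← Finset.sum_range_reflect]
    refine Finset.sum_congr rfl fun k hk => ?_
    have hk' : k < s := Finset.mem_range.mp hk
    have h3 : s + 1 + (s - 1 - k) = 2*s - k := by omega
    rw [h3, hsym k (by omega)]
  rw [h2]; ring

lemma int_weight (α : ℝ) (hα : α ≠ 0) :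
    ∫ θ in (0:ℝ)..α, (1 - θ/α) = α/2 := by
  have h : ∀ x ∈ Set.uIcc (0:ℝ) α, HasDerivAt (fun θ : ℝ => θ - θ^2/(2*α)) (1 - x/α) x := by
    intro x _
    have h1 : HasDerivAt (fun θ : ℝ => θ - θ^2/(2*α)) (1 - 2*x^1/(2*α)) x :=
      (hasDerivAt_id x).sub ((hasDerivAt_pow 2 x).div_const (2*α))
    convert h1 using 1
    field_simp
  rw [intervalIntegral.integral_eq_sub_of_hasDerivAt h
    ((Continuous.intervalIntegrable (by continuity) 0 α))]
  field_simp; ring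

lemma int_weight_cos (α : ℝ) (hα : α ≠ 0) (j : ℝ) (hj : j ≠ 0) :
    ∫ θ in (0:ℝ)..α, (1 - θ/α) * Real.cos (j*θ)
      = (1 - Real.cos (j*α))/(α * j^2) := by
  have h : ∀ x ∈ Set.uIcc (0:ℝ) α,
      HasDerivAt (fun θ : ℝ => (1 - θ/α) * Real.sin (j*θ)/j - Real.cos (j*θ)/(α*j^2))
        ((1 - x/α) * Real.cos (j*x)) x := by
    intro x _
    have hs : HasDerivAt (fun θ : ℝ => Real.sin (j*θ)) (Real.cos (j*x) * j) x := by
      exact ((Real.hasDerivAt_sin (j*x)).comp x ((hasDerivAt_id x).const_mul j)).congr_deriv (by ring)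
    have hc : HasDerivAt (fun θ : ℝ => Real.cos (j*θ)) (-Real.sin (j*x) * j) x := by
      exact ((Real.hasDerivAt_cos (j*x)).comp x ((hasDerivAt_id x).const_mul j)).congr_deriv (by ring)
    have hw : HasDerivAt (fun θ : ℝ => 1 - θ/α) (-(1/α)) x := by
      exact ((hasDerivAt_const x (1:ℝ)).sub ((hasDerivAt_id x).div_const α)).congr_deriv (by ring)
    have h1 : HasDerivAt (fun θ : ℝ => (1 - θ/α) * Real.sin (j*θ)/j - Real.cos (j*θ)/(α*j^2))
        (((-(1/α)) * Real.sin (j*x) + (1 - x/α) * (Real.cos (j*x) * j))/j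
          - (-Real.sin (j*x) * j)/(α*j^2)) x :=
      ((hw.mul hs).div_const j).sub (hc.div_const (α*j^2))
    convert h1 using 1
    field_simp; ring
  rw [intervalIntegral.integral_eq_sub_of_hasDerivAt h
    ((Continuous.intervalIntegrable (by continuity) 0 α))]
  simp only [mul_zero, Real.sin_zero, Real.cos_zero]
  field_simp; ring

end helpers
/-- for `α ∈ (0, π]` and odd `m ≥ 1`,
`∫₀^α (1 - θ/α)² (cos θ)^m sin θ dθ
  = 1/(m+1) - (1/((m+1) 2^(m+1))) binom(m+1,(m+1)/2)
    + (2^(1-m)/((m+1)α²)) Σ_{k=0}^{(m-1)/2} binom(m+1,k)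
        (cos((m-2k+1)α) - 1)/(m-2k+1)²`. -/
theorem askey_integral_odd
    (α : ℝ) (hα : α ∈ Set.Ioc 0 π) (m : ℕ) (hm : Odd m) :
    ∫ θ in (0 : ℝ)..α, (1 - θ / α) ^ 2 * (Real.cos θ) ^ m * Real.sin θ
      = 1 / ((m : ℝ) + 1)
        - (1 / (((m : ℝ) + 1) * 2 ^ (m + 1))) * ((m + 1).choose ((m + 1) / 2) : ℝ)
        + (2 : ℝ) ^ (1 - (m : ℤ)) / (((m : ℝ) + 1) * α ^ 2) *
            ∑ k ∈ Finset.range ((m - 1) / 2 + 1),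
              ((m + 1).choose k : ℝ) *
                (Real.cos (((m : ℝ) - 2 * (k : ℝ) + 1) * α) - 1) /
                  ((m : ℝ) - 2 * (k : ℝ) + 1) ^ 2 := by
  obtain ⟨t, rfl⟩ := hm
  have hα0 : α ≠ 0 := ne_of_gt hα.1
  set m := 2 * t + 1 with hmdef
  set n := m + 1 with hndef
  set s := t + 1 with hsdef
  have hmr : ((m : ℝ)) + 1 = (n : ℝ) := by push_cast [hndef]; ring
  have hm1 : ((m : ℝ)) + 1 ≠ 0 := by positivity
  -- integration by parts
  set u : ℝ → ℝ := fun θ => (1 - θ/α)^2 with hu_def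
  set u' : ℝ → ℝ := fun θ => -(2/α) * (1 - θ/α) with hu'_def
  set v : ℝ → ℝ := fun θ => -((Real.cos θ)^n)/(n : ℝ) with hv_def
  set v' : ℝ → ℝ := fun θ => (Real.cos θ)^m * Real.sin θ with hv'_def
  have hu : ∀ x ∈ Set.uIcc (0:ℝ) α, HasDerivAt u (u' x) x := by
    intro x _
    have h1 : HasDerivAt (fun θ : ℝ => 1 - θ/α) (-(1/α)) x := by
      exact ((hasDerivAt_const x (1:ℝ)).sub ((hasDerivAt_id x).div_const α)).congr_deriv (by ring)
    have := h1.pow 2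
    exact this.congr_deriv (by simp only [hu'_def]; ring)
  have hv : ∀ x ∈ Set.uIcc (0:ℝ) α, HasDerivAt v (v' x) x := by
    intro x _
    have h1 := ((Real.hasDerivAt_cos x).pow n).neg.div_const (n : ℝ)
    have hn0 : (n:ℝ) ≠ 0 := by positivity
    refine h1.congr_deriv ?_
    simp only [hv'_def, hndef]
    rw [Nat.add_sub_cancel]
    field_simp
  have hIBP := intervalIntegral.integral_mul_deriv_eq_deriv_mul hu hv
    (Continuous.intervalIntegrable (by fun_prop) 0 α)
    (Continuous.intervalIntegrable (by fun_prop) 0 α)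
  have hI : (∫ θ in (0:ℝ)..α, (1 - θ / α) ^ 2 * (Real.cos θ) ^ m * Real.sin θ)
      = 1/(n:ℝ) - ∫ x in (0:ℝ)..α, u' x * v x := by
    have : (∫ θ in (0:ℝ)..α, (1 - θ / α) ^ 2 * (Real.cos θ) ^ m * Real.sin θ)
        = ∫ x in (0:ℝ)..α, u x * v' x := by
      refine intervalIntegral.integral_congr fun x _ => ?_
      simp [hu_def, hv'_def, mul_assoc]
    rw [this, hIBP]
    have h0 : u α = 0 := by simp [hu_def, div_self hα0]
    have h1 : u 0 = 1 := by simp [hu_def]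
    have h2 : v 0 = -(1/(n:ℝ)) := by simp [hv_def]; ring
    rw [h0, h1, h2]
    ring
  -- the remaining integral as constant times J
  set J : ℝ := ∫ θ in (0:ℝ)..α, (1 - θ/α) * (Real.cos θ)^n with hJdef
  have hUV : (∫ x in (0:ℝ)..α, u' x * v x) = (2/(α*(n:ℝ))) * J := by
    rw [hJdef, ← intervalIntegral.integral_const_mul]
    refine intervalIntegral.integral_congr fun x _ => ?_
    have hn0 : (n:ℝ) ≠ 0 := by positivity
    simp only [hu'_def, hv_def]
    field_simp
  -- expand cos^n into a cosine sum
  set W : ℕ → ℝ := fun k => ∫ θ in (0:ℝ)..α, (1 - θ/α) * Real.cos ((2*(k:ℝ) - (n:ℝ))*θ)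
    with hWdef
  have hJ : J = (1/2^n) * ∑ k ∈ Finset.range (n+1), (n.choose k : ℝ) * W k := by
    have step1 : J = ∫ θ in (0:ℝ)..α, ∑ k ∈ Finset.range (n+1),
        ((1/2^n : ℝ) * (n.choose k : ℝ)) * ((1 - θ/α) * Real.cos ((2*(k:ℝ) - (n:ℝ))*θ)) := by
      refine intervalIntegral.integral_congr fun θ _ => ?_
      have h2n : (Real.cos θ)^n = (∑ k ∈ Finset.range (n+1),
          (n.choose k : ℝ) * Real.cos ((2*(k:ℝ) - (n:ℝ))*θ))/2^n := by
        rw [← two_cos_pow n θ, mul_pow]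
        field_simp
      rw [h2n, Finset.sum_div, Finset.mul_sum]
      exact Finset.sum_congr rfl fun k _ => by ring
    rw [step1, intervalIntegral.integral_finset_sum
      (fun k _ => Continuous.intervalIntegrable (by fun_prop) 0 α), Finset.mul_sum]
    refine Finset.sum_congr rfl fun k _ => ?_
    rw [intervalIntegral.integral_const_mul]
    simp only [hWdef]
    ring
  -- fold the symmetric sum
  have hfold : ∑ k ∈ Finset.range (n+1), (n.choose k : ℝ) * W k
      = (n.choose s : ℝ) * W s + 2 * ∑ k ∈ Finset.range s, (n.choose k : ℝ) * W k := by
    have hns : n + 1 = 2*s + 1 := by omega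
    rw [hns]
    refine fold_sym s (fun k => (n.choose k : ℝ) * W k) fun k hk => ?_
    have hn2s : n = 2*s := by omega
    have hch : n.choose (2*s - k) = n.choose k := by
      rw [← hn2s, Nat.choose_symm (by omega)]
    have hW : W (2*s - k) = W k := by
      simp only [hWdef]
      refine intervalIntegral.integral_congr fun θ _ => ?_
      have hcast : 2*(((2*s - k : ℕ)):ℝ) - (n:ℝ) = -(2*(k:ℝ) - (n:ℝ)) := by
        rw [Nat.cast_sub hk]
        have : (n:ℝ) = 2*(s:ℝ) := by exact_mod_cast congrArg (Nat.cast (R := ℝ)) hn2s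
        rw [this]
        push_cast
        ring
      rw [hcast, neg_mul, Real.cos_neg]
    simp only [hch, hW]
  -- evaluate the middle term
  have hWs : W s = α/2 := by
    have hz : 2*(s:ℝ) - (n:ℝ) = 0 := by
      have : n = 2*s := by omega
      rw [this]; push_cast; ring
    simp only [hWdef]
    rw [show (∫ θ in (0:ℝ)..α, (1 - θ/α) * Real.cos ((2*(s:ℝ) - (n:ℝ))*θ))
        = ∫ θ in (0:ℝ)..α, (1 - θ/α) from
      intervalIntegral.integral_congr fun θ _ => by rw [hz]; simp]
    exact int_weight α hα0
  -- evaluate the lower terms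
  have hWk : ∀ k ∈ Finset.range s, W k
      = (1 - Real.cos ((2*(k:ℝ) - (n:ℝ))*α))/(α * (2*(k:ℝ) - (n:ℝ))^2) := by
    intro k hk
    have hk' : k < s := Finset.mem_range.mp hk
    have hj : 2*(k:ℝ) - (n:ℝ) ≠ 0 := by
      have h1 : (k:ℝ) < (s:ℝ) := by exact_mod_cast hk'
      have h2 : (n:ℝ) = 2*(s:ℝ) := by exact_mod_cast congrArg (Nat.cast (R := ℝ)) (by omega : n = 2*s)
      nlinarith
    exact int_weight_cos α hα0 _ hj
  -- rewrite the target sum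
  have e2 : n/2 = s := by omega
  have e1 : (m-1)/2 + 1 = s := by omega
  have hS' : ∑ k ∈ Finset.range ((m-1)/2 + 1),
        ((n).choose k : ℝ) * (Real.cos (((m:ℝ) - 2*(k:ℝ) + 1)*α) - 1) / ((m:ℝ) - 2*(k:ℝ) + 1)^2
      = (-α) * ∑ k ∈ Finset.range s, (n.choose k : ℝ) * W k := by
    rw [e1, Finset.mul_sum]
    refine Finset.sum_congr rfl fun k hk => ?_
    rw [hWk k hk]
    have hk' : k < s := Finset.mem_range.mp hk
    have hj : 2*(k:ℝ) - (n:ℝ) ≠ 0 := by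
      have h1 : (k:ℝ) < (s:ℝ) := by exact_mod_cast hk'
      have h2 : (n:ℝ) = 2*(s:ℝ) := by exact_mod_cast congrArg (Nat.cast (R := ℝ)) (by omega : n = 2*s)
      nlinarith
    have hmj : (m:ℝ) - 2*(k:ℝ) + 1 = -(2*(k:ℝ) - (n:ℝ)) := by
      rw [← hmr]; ring
    rw [hmj, neg_mul, Real.cos_neg, neg_sq]
    field_simp
    ring
  -- final algebra
  rw [hI, hUV, hJ, hfold, hWs, hS', e2]
  have h2pow : (2:ℝ)^(1 - (m:ℤ)) = 2/2^m := by
    rw [zpow_sub₀ (by norm_num : (2:ℝ) ≠ 0), zpow_one, zpow_natCast]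
  rw [h2pow, hmr]
  set S := ∑ k ∈ Finset.range s, (n.choose k : ℝ) * W k with hSdef
  have hn0 : (n:ℝ) ≠ 0 := by positivity
  have h2m : (2:ℝ)^m ≠ 0 := by positivity
  have h2n : (2:ℝ)^n = 2 * 2^m := by rw [hndef, pow_succ]; ring
  rw [h2n]
  field_simp
  ring
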